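/- Let ℓ ≥ 1, R = 𝔽₂[X]/(X^ℓ-1), A a free R-module with 𝔽₂-Hamming weight, and let D^A be an (e₀,e₁,γ)-noisy-syndrome decoder for an R-linear map ∂^A : A₁ → A₀, i.e., for all c₁ ∈ A₁ with |c₁| ≤ e₁ and c₀ ∈ A₀ with |c₀| ≤ e₀ we have |D^A(c₀ + ∂^A c₁) - c₁| ≤ γ|c₀|. Suppose x ∈ A₀ with 2|x| ≤ e₀, and ỹ, y ∈ A₁ are such that for all 1 ≤ k ≤ t, |Σ_{i∈[0,k)} Xⁱ(y - ỹ)| ≤ e₁. Let s = (1+X)x + ∂^A y. Then for every 1 ≤ k ≤ t, defining ã_k = D^A(Σ_{i∈[0,k)} Xⁱ(s - ∂^A ỹ)) and a_k = Σ_{i∈[0,k)} Xⁱ(y - ỹ), we have |ã_k - a_k| ≤ 2γ|x|. -/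

import Mathlib

/-- Multiplication by `X^k` on the free module `R^n`, `R = 𝔽₂[X]/(X^ℓ-1)`,
in coefficient coordinates: `(X^k · a)_{j,i} = a_{j, i-k}`. -/
def shiftk (ℓ n : ℕ) (k : ℕ) (a : Fin n × ZMod ℓ → ZMod 2) : Fin n × ZMod ℓ → ZMod 2 :=
  fun p => a (p.1, p.2 - (k : ZMod ℓ))

lemma shiftk_add (ℓ n k : ℕ) (a b : Fin n × ZMod ℓ → ZMod 2) :
    shiftk ℓ n k (a + b) = shiftk ℓ n k a + shiftk ℓ n k b := rfl

lemma shiftk_zero (ℓ n : ℕ) (a : Fin n × ZMod ℓ → ZMod 2) :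
    shiftk ℓ n 0 a = a := by
  funext p; simp [shiftk]

lemma shiftk_shiftk (ℓ n i j : ℕ) (a : Fin n × ZMod ℓ → ZMod 2) :
    shiftk ℓ n i (shiftk ℓ n j a) = shiftk ℓ n (i + j) a := by
  funext p
  simp only [shiftk]
  congr 2
  push_cast
  ring

lemma hammingNorm_shiftk (ℓ n k : ℕ) [NeZero ℓ] (a : Fin n × ZMod ℓ → ZMod 2) :
    hammingNorm (shiftk ℓ n k a) = hammingNorm a := by
  unfold hammingNorm shiftk
  apply Finset.card_bij (fun p _ => (p.1, p.2 - (k : ZMod ℓ)))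
  · intro p hp
    simp only [Finset.mem_filter, Finset.mem_univ, true_and] at hp ⊢
    exact hp
  · intro p _ q _ h
    rw [Prod.mk.injEq] at h
    have h1 : p.1 = q.1 := h.1
    have h2 : p.2 - (k : ZMod ℓ) = q.2 - (k : ZMod ℓ) := h.2
    have h2' : p.2 = q.2 := by
      have := congrArg (· + (k : ZMod ℓ)) h2
      simpa using this
    exact Prod.ext h1 h2'
  · intro q hq
    refine ⟨(q.1, q.2 + (k : ZMod ℓ)), ?_, ?_⟩
    · simp only [Finset.mem_filter, Finset.mem_univ, true_and] at hq ⊢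
      simpa using hq
    · simp

lemma hammingNorm_add_le' {m : ℕ} {α : Type*} [Fintype α] (a b : α → ZMod m) :
    hammingNorm (a + b) ≤ hammingNorm a + hammingNorm b := by
  have e1 : hammingNorm (a + b) = hammingDist a (-b) := by
    rw [hammingDist_eq_hammingNorm, ← neg_add]; simp only [hammingNorm, Pi.neg_apply, neg_ne_zero]
  have e2 : hammingDist a (-b) ≤ hammingDist a 0 + hammingDist 0 (-b) :=
    hammingDist_triangle a 0 (-b)
  have e3 : hammingDist (0 : α → ZMod m) (-b) = hammingNorm b := by
    rw [hammingDist_comm, hammingDist_zero_right]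
    simp [hammingNorm, neg_ne_zero]
  rw [e1]
  calc hammingDist a (-b) ≤ hammingDist a 0 + hammingDist 0 (-b) := e2
    _ = hammingNorm a + hammingNorm b := by rw [hammingDist_zero_right, e3]

lemma shiftk_telescope (ℓ n : ℕ) (x : Fin n × ZMod ℓ → ZMod 2) (k : ℕ) :
    ∑ i ∈ Finset.range k, (shiftk ℓ n i x + shiftk ℓ n (i + 1) x)
      = x + shiftk ℓ n k x := by
  induction k with
  | zero =>
    funext p
    simp only [Finset.range_zero, Finset.sum_empty, shiftk_zero, Pi.zero_apply, Pi.add_apply]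
    exact (CharTwo.add_self_eq_zero _).symm
  | succ k ih =>
    rw [Finset.sum_range_succ, ih]
    have h2 : shiftk ℓ n k x + shiftk ℓ n k x = 0 := by
      funext p
      exact CharTwo.add_self_eq_zero _
    calc x + shiftk ℓ n k x + (shiftk ℓ n k x + shiftk ℓ n (k + 1) x)
        = x + shiftk ℓ n (k + 1) x + (shiftk ℓ n k x + shiftk ℓ n k x) := by abel
      _ = x + shiftk ℓ n (k + 1) x := by rw [h2, add_zero]

/-- prefix-sum noisy-syndrome decoding accuracy: with `D^A` an
`(e₀,e₁,γ)`-noisy-syndrome decoder for the `R_ℓ`-linear map `∂^A` (linearity over `R_ℓ`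
is expressed by `𝔽₂`-linearity plus commuting with the `X`-shift), `2|x| ≤ e₀`,
all prefix sums `∑_{i<k} Xⁱ(y-ỹ)` for `1 ≤ k ≤ t` of weight `≤ e₁`, and
`s = (1+X)x + ∂^A y`: for every `1 ≤ k ≤ t`,
`|D^A(∑_{i<k} Xⁱ(s - ∂^A ỹ)) - ∑_{i<k} Xⁱ(y-ỹ)| ≤ 2γ|x|`. -/
theorem stmt14 (ℓ : ℕ) [NeZero ℓ] {n₁ n₀ : ℕ} (e₀ e₁ : ℕ) (γ : ℝ) (hγ : 0 ≤ γ)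
    (dA : (Fin n₁ × ZMod ℓ → ZMod 2) →ₗ[ZMod 2] (Fin n₀ × ZMod ℓ → ZMod 2))
    (hcomm : ∀ a, dA (shiftk ℓ n₁ 1 a) = shiftk ℓ n₀ 1 (dA a))
    (DA : (Fin n₀ × ZMod ℓ → ZMod 2) → (Fin n₁ × ZMod ℓ → ZMod 2))
    (hDA : ∀ (c₁ : Fin n₁ × ZMod ℓ → ZMod 2) (c₀ : Fin n₀ × ZMod ℓ → ZMod 2),
      hammingNorm c₁ ≤ e₁ → hammingNorm c₀ ≤ e₀ →
      (hammingNorm (DA (c₀ + dA c₁) - c₁) : ℝ) ≤ γ * hammingNorm c₀)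
    (t : ℕ) (x : Fin n₀ × ZMod ℓ → ZMod 2) (hx : 2 * hammingNorm x ≤ e₀)
    (y yt : Fin n₁ × ZMod ℓ → ZMod 2)
    (hpre : ∀ k, 1 ≤ k → k ≤ t →
      hammingNorm (∑ i ∈ Finset.range k, shiftk ℓ n₁ i (y - yt)) ≤ e₁)
    (s : Fin n₀ × ZMod ℓ → ZMod 2)
    (hs : s = (x + shiftk ℓ n₀ 1 x) + dA y) :
    ∀ k, 1 ≤ k → k ≤ t →
      (hammingNorm
          (DA (∑ i ∈ Finset.range k, shiftk ℓ n₀ i (s - dA yt)) -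
            ∑ i ∈ Finset.range k, shiftk ℓ n₁ i (y - yt)) : ℝ) ≤
        2 * γ * hammingNorm x := by
  -- dA commutes with shiftk i
  have hcommi : ∀ (i : ℕ) (a : Fin n₁ × ZMod ℓ → ZMod 2),
      dA (shiftk ℓ n₁ i a) = shiftk ℓ n₀ i (dA a) := by
    intro i
    induction i with
    | zero => intro a; rw [shiftk_zero, shiftk_zero]
    | succ i ih =>
      intro a
      have h1 : shiftk ℓ n₁ (i + 1) a = shiftk ℓ n₁ 1 (shiftk ℓ n₁ i a) := by
        rw [shiftk_shiftk, Nat.add_comm]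
      rw [h1, hcomm, ih, shiftk_shiftk, Nat.add_comm]
  intro k hk1 hkt
  -- the decomposition of the prefix sum of syndromes
  have key : (∑ i ∈ Finset.range k, shiftk ℓ n₀ i (s - dA yt)) =
      (x + shiftk ℓ n₀ k x) + dA (∑ i ∈ Finset.range k, shiftk ℓ n₁ i (y - yt)) := by
    have hsd : s - dA yt = (x + shiftk ℓ n₀ 1 x) + dA (y - yt) := by
      rw [hs, map_sub]; abel
    rw [map_sum]
    have hterm : ∀ i, shiftk ℓ n₀ i (s - dA yt) =
        (shiftk ℓ n₀ i x + shiftk ℓ n₀ (i + 1) x) + dA (shiftk ℓ n₁ i (y - yt)) := by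
      intro i
      rw [hsd, shiftk_add, shiftk_add, shiftk_shiftk, hcommi]
    simp only [hterm]
    rw [Finset.sum_add_distrib, shiftk_telescope]
  rw [key]
  have hle : hammingNorm (x + shiftk ℓ n₀ k x) ≤ 2 * hammingNorm x := by
    calc hammingNorm (x + shiftk ℓ n₀ k x)
        ≤ hammingNorm x + hammingNorm (shiftk ℓ n₀ k x) := hammingNorm_add_le' _ _
      _ = 2 * hammingNorm x := by rw [hammingNorm_shiftk, two_mul]
  have h := hDA (∑ i ∈ Finset.range k, shiftk ℓ n₁ i (y - yt)) (x + shiftk ℓ n₀ k x)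
    (hpre k hk1 hkt) (hle.trans hx)
  refine h.trans ?_
  have hb : (hammingNorm (x + shiftk ℓ n₀ k x) : ℝ) ≤ 2 * hammingNorm x := by
    exact_mod_cast hle
  calc γ * (hammingNorm (x + shiftk ℓ n₀ k x) : ℝ) ≤ γ * (2 * hammingNorm x) :=
        mul_le_mul_of_nonneg_left hb hγ
    _ = 2 * γ * hammingNorm x := by ring
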